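/- arXiv:2401.04548 — 3 statements merged into one kernel-verified Lean document; each statement's English description precedes it below -/
import Mathlib

section
/- For the Lie algebra L(3,2,x) with brackets [f_1, f_3] = f_1, [f_2, f_3] = x f_2, [f_1, f_2] = 0, and orthonormal basis e_1 = αf_1, e_2 = βf_1 + εf_2, e_3 = γf_1 + ζf_2 + ιf_3 (α, ε, ι ≠ 0), the generalised Killing endomorphism matrix A (computed by the structure-constant formula A_{11} = (1/4)(c_{12}^3 - c_{13}^2 - c_{23}^1), A_{12} = -(1/2)c_{23}^2, A_{13} = -(1/2)c_{23}^3, A_{21} = (1/2)c_{13}^1, A_{22} = (1/4)(c_{12}^3 + c_{13}^2 + c_{23}^1), A_{23} = (1/2)c_{13}^3, A_{31} = -(1/2)c_{12}^1, A_{32} = -(1/2)c_{12}^2, A_{33} = (1/4)(-c_{12}^3 - c_{13}^2 + c_{23}^1), where c_{ij}^k are the structure constants in the basis (e_1,e_2,e_3)) is symmetric if and only if x = -1. -/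
/-- The bracket of the Lie algebra `L(3,2,x)` in coordinates with respect to the basis
`(f_1, f_2, f_3)`: `[f_1, f_3] = f_1`, `[f_2, f_3] = x f_2`, `[f_1, f_2] = 0`. -/
def L32bracket (x : ℝ) (u v : Fin 3 → ℝ) : Fin 3 → ℝ :=
  ![u 0 * v 2 - u 2 * v 0, x * (u 1 * v 2 - u 2 * v 1), 0]

/-- The generalised Killing endomorphism matrix built from structure constants. -/
noncomputable def gkMatrix (c12_1 c12_2 c12_3 c13_1 c13_2 c13_3 c23_1 c23_2 c23_3 : ℝ) :
    Matrix (Fin 3) (Fin 3) ℝ :=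
  !![(1/4) * (c12_3 - c13_2 - c23_1), -(1/2) * c23_2, -(1/2) * c23_3;
     (1/2) * c13_1, (1/4) * (c12_3 + c13_2 + c23_1), (1/2) * c13_3;
     -(1/2) * c12_1, -(1/2) * c12_2, (1/4) * (-c12_3 - c13_2 + c23_1)]

theorem L32_gk_symm_iff (x α β γ ε ζ ι : ℝ)
    (hx : 0 < |x|) (hx1 : |x| ≤ 1)
    (hα : α ≠ 0) (hε : ε ≠ 0) (hι : ι ≠ 0)
    (e : Fin 3 → Fin 3 → ℝ)
    (he : e = ![![α, 0, 0], ![β, ε, 0], ![γ, ζ, ι]])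
    (c : Fin 3 → Fin 3 → Fin 3 → ℝ)
    (hc : ∀ i j, L32bracket x (e i) (e j) = ∑ k, c i j k • e k) :
    (gkMatrix (c 0 1 0) (c 0 1 1) (c 0 1 2) (c 0 2 0) (c 0 2 1) (c 0 2 2)
        (c 1 2 0) (c 1 2 1) (c 1 2 2)).IsSymm ↔ x = -1 := by
  subst he
  have h01 := hc 0 1
  have h02 := hc 0 2
  have h12 := hc 1 2
  have h01a := congrFun h01 0
  have h01b := congrFun h01 1
  have h01c := congrFun h01 2
  have h02a := congrFun h02 0
  have h02b := congrFun h02 1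
  have h02c := congrFun h02 2
  have h12a := congrFun h12 0
  have h12b := congrFun h12 1
  have h12c := congrFun h12 2
  simp [L32bracket, Fin.sum_univ_three] at h01a h01b h01c h02a h02b h02c h12a h12b h12c
  -- c i j 2 = 0 from the third coordinates
  have hc012 : c 0 1 2 = 0 := by
    rcases h01c with h | h; · exact h
    · exact absurd h hι
  have hc022 : c 0 2 2 = 0 := by
    rcases h02c with h | h; · exact h
    · exact absurd h hι
  have hc122 : c 1 2 2 = 0 := by
    rcases h12c with h | h; · exact h
    · exact absurd h hι
  rw [hc012] at h01b; rw [hc022] at h02b; rw [hc122] at h12b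
  simp at h01b h02b h12b
  have hc011 : c 0 1 1 = 0 := by
    rcases h01b with h | h; · exact h
    · exact absurd h hε
  have hc021 : c 0 2 1 = 0 := by
    rcases h02b.symm with h | h
    · exact absurd h hε
    · exact h
  have hc121 : c 1 2 1 = x * ι := by
    have : c 1 2 1 * ε = x * ι * ε := by linarith [h12b]
    exact mul_right_cancel₀ hε this
  rw [hc011, hc012] at h01a; rw [hc021, hc022] at h02a; rw [hc121, hc122] at h12a
  simp at h01a h02a h12a
  have hc010 : c 0 1 0 = 0 := by
    rcases h01a.symm with h | h
    · exact absurd h hα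
    · exact h
  have hc020 : c 0 2 0 = ι := by
    have : c 0 2 0 * α = ι * α := by linarith [h02a]
    exact mul_right_cancel₀ hα this
  constructor
  · intro h
    have h10 := congrFun (congrFun h 1) 0
    simp [Matrix.transpose_apply, gkMatrix, hc121, hc020] at h10
    have : (x + 1) * ι = 0 := by linarith
    rcases mul_eq_zero.mp this with h' | h'
    · linarith
    · exact absurd h' hι
  · intro hxm1
    subst hxm1
    rw [Matrix.IsSymm]
    ext i j
    fin_cases i <;> fin_cases j <;>
      simp [Matrix.transpose_apply, gkMatrix, hc010, hc011, hc012, hc020, hc021, hc022,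
        hc121, hc122]
end

section
/- For the Lie algebra L(3,2,-1) (the Poincaré algebra p(1,1)) with orthonormal basis obtained via an upper-triangular change of basis with diagonal entries α, ε, ι > 0, the generalised Killing endomorphism has matrix A = [[(−2)βι/(4α), ι/2, 0], [ι/2, 2βι/(4α), 0], [0, 0, 2βι/(4α)]] (i.e., with x = -1 in the general formula), whose three eigenvalues βι/(2α), √(α²ι² + β²ι²)/(2α), -√(α²ι² + β²ι²)/(2α) are pairwise distinct. -/
/-- For `L(3,2,-1)` (the Poincaré algebra `p(1,1)`), the generalised Killing
endomorphism matrix (the general formula evaluated at `x = -1`) has the three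
pairwise distinct eigenvalues `βι/(2α)` and `±√(α²ι² + β²ι²)/(2α)`. -/
theorem L32_neg1_eigenvalues (α β γ ε ζ ι : ℝ)
    (hα : 0 < α) (hε : 0 < ε) (hι : 0 < ι)
    (A : Matrix (Fin 3) (Fin 3) ℝ)
    (hA : A = !![(-2 : ℝ) * β * ι / (4 * α), ι / 2, 0;
                 ι / 2, 2 * β * ι / (4 * α), 0;
                 0, 0, 2 * β * ι / (4 * α)]) :
    (β * ι / (2 * α) ≠ Real.sqrt (α^2 * ι^2 + β^2 * ι^2) / (2 * α)
      ∧ β * ι / (2 * α) ≠ -(Real.sqrt (α^2 * ι^2 + β^2 * ι^2) / (2 * α))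
      ∧ Real.sqrt (α^2 * ι^2 + β^2 * ι^2) / (2 * α)
          ≠ -(Real.sqrt (α^2 * ι^2 + β^2 * ι^2) / (2 * α)))
    ∧ (∃ v : Fin 3 → ℝ, v ≠ 0 ∧ A.mulVec v = (β * ι / (2 * α)) • v)
    ∧ (∃ v : Fin 3 → ℝ, v ≠ 0 ∧
        A.mulVec v = (Real.sqrt (α^2 * ι^2 + β^2 * ι^2) / (2 * α)) • v)
    ∧ (∃ v : Fin 3 → ℝ, v ≠ 0 ∧
        A.mulVec v = (-(Real.sqrt (α^2 * ι^2 + β^2 * ι^2) / (2 * α))) • v) := by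
  set s := Real.sqrt (α^2 * ι^2 + β^2 * ι^2) with hs
  have hnn : (0:ℝ) ≤ α^2 * ι^2 + β^2 * ι^2 := by positivity
  have hs2 : s ^ 2 = α^2 * ι^2 + β^2 * ι^2 := Real.sq_sqrt hnn
  have hspos : 0 < s := by
    rw [hs]
    apply Real.sqrt_pos.2
    have : 0 < α^2 * ι^2 := by positivity
    nlinarith [sq_nonneg (β * ι)]
  have hsq : (β * ι)^2 < s ^ 2 := by
    rw [hs2]; nlinarith [mul_pos hα hι]
  have hsgt : β * ι < s := by nlinarith
  have hα' : (α:ℝ) ≠ 0 := ne_of_gt hα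
  refine ⟨⟨?_, ?_, ?_⟩, ?_, ?_, ?_⟩
  · intro h
    have h1 : β * ι = s := by field_simp at h; linarith
    exact absurd h1 (ne_of_lt hsgt)
  · intro h
    rw [← neg_div] at h
    have h1 : β * ι = -s := by field_simp at h; linarith
    have h2 : (β * ι)^2 = s^2 := by rw [h1]; ring
    nlinarith
  · intro h
    rw [← neg_div] at h
    have h1 : s = -s := by field_simp at h; linarith
    linarith
  · refine ⟨![0, 0, 1], ?_, ?_⟩
    · intro h
      have := congrFun h 2
      simp at this
    · rw [hA]
      funext i
      fin_cases i <;>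
        simp [Matrix.mulVec, dotProduct, Fin.sum_univ_three] <;> ring
  · refine ⟨![ι / 2, s / (2*α) + β * ι / (2 * α), 0], ?_, ?_⟩
    · intro h
      have := congrFun h 0
      simp at this
      exact ne_of_gt hι this
    · rw [hA]
      funext i
      fin_cases i <;>
        simp [Matrix.mulVec, dotProduct, Fin.sum_univ_three] <;>
        field_simp <;> nlinarith [hs2]
  · refine ⟨![ι / 2, -(s / (2*α)) + β * ι / (2 * α), 0], ?_, ?_⟩
    · intro h
      have := congrFun h 0
      simp at this
      exact ne_of_gt hι this
    · rw [hA]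
      funext i
      fin_cases i
      · simp [Matrix.mulVec, dotProduct, Fin.sum_univ_three]
        field_simp; ring
      · simp [Matrix.mulVec, dotProduct, Fin.sum_univ_three]
        field_simp
        linear_combination (-4) * hs2
      · simp [Matrix.mulVec, dotProduct, Fin.sum_univ_three]
end

section
/- For x = 0 (the Euclidean algebra e(2)), the matrix A = (1/(4 det P))·[[ι²(α²-β²-ε²), 2αβι², 0], [2αβι², ι²(-α²+β²+ε²), 0], [0, 0, ι²(α²+β²+ε²)]] has eigenvalues λ, √(λ² - ι²/4), and -√(λ² - ι²/4), where λ = ι²(α²+β²+ε²)/(4 det P). -/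
open Polynomial

lemma charpoly_aux (a b c d e : ℝ) :
    (!![a,b,0;c,d,0;0,0,e] : Matrix (Fin 3) (Fin 3) ℝ).charpoly
      = (X - C e) * (X^2 - C (a+d) * X + C (a*d - b*c)) := by
  rw [Matrix.charpoly, Matrix.det_fin_three]
  simp [Matrix.charmatrix_apply, Matrix.one_apply]
  ring

/-- For the Euclidean algebra `e(2)` (`x = 0`), the generalised Killing endomorphism
matrix has characteristic polynomial `(X - λ)(X² - (λ² - ι²/4))`, i.e. eigenvalues
`λ` and `±√(λ² - ι²/4)`, where `λ = ι²(α²+β²+ε²)/(4 det P)`. -/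
theorem E2_gk_charpoly (α β γ ε ζ ι : ℝ)
    (hα : 0 < α) (hε : 0 < ε) (hι : 0 < ι)
    (lam : ℝ) (hlam : lam = ι^2 * (α^2 + β^2 + ε^2) / (4 * (α * ε * ι)))
    (A : Matrix (Fin 3) (Fin 3) ℝ)
    (hA : A = (1 / (4 * (α * ε * ι))) •
      !![ι^2 * (α^2 - β^2 - ε^2), 2 * α * β * ι^2, 0;
         2 * α * β * ι^2, ι^2 * (-α^2 + β^2 + ε^2), 0;
         0, 0, ι^2 * (α^2 + β^2 + ε^2)]) :
    A.charpoly = (X - C lam) * (X^2 - C (lam^2 - ι^2 / 4)) := by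
  set s : ℝ := 1 / (4 * (α * ε * ι)) with hs
  have hA' : A = !![s * (ι^2 * (α^2 - β^2 - ε^2)), s * (2 * α * β * ι^2), 0;
      s * (2 * α * β * ι^2), s * (ι^2 * (-α^2 + β^2 + ε^2)), 0;
      0, 0, s * (ι^2 * (α^2 + β^2 + ε^2))] := by
    rw [hA]
    ext i j
    fin_cases i <;> fin_cases j <;> simp
  rw [hA', charpoly_aux]
  have hne : 4 * (α * ε * ι) ≠ 0 := by positivity
  have h1 : s * (ι^2 * (α^2 + β^2 + ε^2)) = lam := by
    rw [hlam, hs]; field_simp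
  have h2 : s * (ι^2 * (α^2 - β^2 - ε^2)) + s * (ι^2 * (-α^2 + β^2 + ε^2)) = 0 := by
    ring
  have h3 : s * (ι^2 * (α^2 - β^2 - ε^2)) * (s * (ι^2 * (-α^2 + β^2 + ε^2)))
      - s * (2 * α * β * ι^2) * (s * (2 * α * β * ι^2)) = -(lam^2 - ι^2 / 4) := by
    rw [hlam, hs]; field_simp; ring
  rw [h1, h2, h3, map_neg, C_0]
  ring
end
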